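/- Let w, v ∈ ℝ^d with l ≤ v ≤ u componentwise. Define a diagonal matrix D with D_{jj} = 1 if l_j ≥ 0; D_{jj} = 0 if u_j ≤ 0; D_{jj} = α_j (any fixed α_j ∈ [0,1]) if u_j > 0 > l_j and w_j ≥ 0; D_{jj} = u_j/(u_j − l_j) if u_j > 0 > l_j and w_j < 0. Define b_j = −u_j l_j/(u_j − l_j) if u_j > 0 > l_j and w_j < 0, and b_j = 0 otherwise. Then ∑_j w_j · max(0, v_j) ≥ ∑_j w_j (D_{jj} v_j + b_j). -/

import Mathlib

/-- Lemma 2.1 (CROWN ReLU layer relaxation). -/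
theorem crown_relu_layer_relaxation (d : ℕ) (w v l u α D b : Fin d → ℝ)
    (hlv : ∀ j, l j ≤ v j) (hvu : ∀ j, v j ≤ u j)
    (hα : ∀ j, 0 ≤ α j ∧ α j ≤ 1)
    (hD1 : ∀ j, 0 ≤ l j → D j = 1)
    (hD0 : ∀ j, u j ≤ 0 → D j = 0)
    (hDα : ∀ j, u j > 0 → 0 > l j → 0 ≤ w j → D j = α j)
    (hDu : ∀ j, u j > 0 → 0 > l j → w j < 0 → D j = u j / (u j - l j))
    (hb1 : ∀ j, u j > 0 → 0 > l j → w j < 0 → b j = -(u j * l j) / (u j - l j))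
    (hb0 : ∀ j, ¬(u j > 0 ∧ 0 > l j ∧ w j < 0) → b j = 0) :
    ∑ j, w j * max 0 (v j) ≥ ∑ j, w j * (D j * v j + b j) := by
  apply Finset.sum_le_sum
  intro j _
  obtain ⟨hα0, hα1⟩ := hα j
  rcases le_or_gt 0 (l j) with hl | hl
  · rw [hD1 j hl, hb0 j (by push_neg; intro _ h; exact absurd hl (not_le.2 h)),
      max_eq_right ((hl.trans (hlv j)))]
    ring_nf
    exact le_refl _
  · rcases le_or_gt (u j) 0 with hu | hu
    · rw [hD0 j hu, hb0 j (by push_neg; intro h; exact absurd h (not_lt.2 hu)),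
        max_eq_left ((hvu j).trans hu)]
      ring_nf; exact le_refl _
    · rcases le_or_gt 0 (w j) with hw | hw
      · rw [hDα j hu hl hw, hb0 j (by push_neg; intro _ _; exact hw)]
        have h1 : α j * v j ≤ max 0 (v j) := by
          rcases le_or_gt 0 (v j) with hv | hv
          · rw [max_eq_right hv]
            nlinarith
          · rw [max_eq_left hv.le]
            nlinarith
        nlinarith
      · rw [hDu j hu hl hw, hb1 j hu hl hw]
        have hul : 0 < u j - l j := by linarith
        have h1 : max 0 (v j) ≤ u j / (u j - l j) * v j + -(u j * l j) / (u j - l j) := by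
          rw [div_mul_eq_mul_div, ← add_div, le_div_iff₀ hul]
          rcases le_or_gt 0 (v j) with hv | hv
          · rw [max_eq_right hv]; nlinarith [hvu j]
          · rw [max_eq_left hv.le]; nlinarith [hlv j]
        nlinarith
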